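/- Let x ∈ ℝⁿ, r > 0, θ, ζ ∈ S^{n-1} and 0 < α ≤ 1. Then at least one of the two sets X⁺(x,r,ζ,α) ∩ H(x,θ,α) and X⁺(x,r,−ζ,α) ∩ H(x,θ,α) is empty. -/
import Mathlib


open MeasureTheory Metric Filter Set
open scoped RealInnerProductSpace

/-- The almost half-space `H(x,θ,α) = {y : (y-x)·θ > α|y-x|}`. -/
def almostHalfSpace {n : ℕ} (x θ : EuclideanSpace ℝ (Fin n)) (α : ℝ) :
    Set (EuclideanSpace ℝ (Fin n)) :=
  {y | α * ‖y - x‖ < ⟪y - x, θ⟫}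

/-- The one-sided open cone `X⁺(x,θ,α) = {y : (y-x)·θ > (1-α²)^{1/2}|y-x|}`. -/
def oneSidedCone {n : ℕ} (x θ : EuclideanSpace ℝ (Fin n)) (α : ℝ) :
    Set (EuclideanSpace ℝ (Fin n)) :=
  {y | Real.sqrt (1 - α ^ 2) * ‖y - x‖ < ⟪y - x, θ⟫}

set_option maxHeartbeats 1000000 in
lemma cone_half_empty {n : ℕ} (x θ ζ : EuclideanSpace ℝ (Fin n)) (α : ℝ)
    (hθ : ‖θ‖ = 1) (hζ : ‖ζ‖ = 1) (hα0 : 0 < α) (hα1 : α ≤ 1)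
    (ht : ⟪ζ, θ⟫ ≤ 0) :
    oneSidedCone x ζ α ∩ almostHalfSpace x θ α = ∅ := by
  ext y
  simp only [mem_inter_iff, mem_empty_iff_false, iff_false, not_and,
    oneSidedCone, almostHalfSpace, mem_setOf_eq]
  intro h1 h2
  set u := y - x with hu
  set s : ℝ := ⟪u, ζ⟫ with hs
  set t : ℝ := ⟪ζ, θ⟫ with htt
  have hsqrt : Real.sqrt (1 - α ^ 2) ^ 2 = 1 - α ^ 2 :=
    Real.sq_sqrt (by nlinarith)
  have hsqrt0 : 0 ≤ Real.sqrt (1 - α ^ 2) := Real.sqrt_nonneg _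
  have hs0 : 0 ≤ s := le_trans (by positivity) h1.le
  -- decomposition identity
  have hkey : ⟪u, θ⟫ = s * t + ⟪u - s • ζ, θ - t • ζ⟫ := by
    have hz : ⟪ζ, ζ⟫ = (1 : ℝ) := by
      rw [real_inner_self_eq_norm_mul_norm, hζ]; ring
    simp only [inner_sub_left, inner_sub_right, real_inner_smul_left,
      real_inner_smul_right, hz]
    rw [← hs, ← htt]; ring
  -- norms of the projections
  have hnu : ‖u - s • ζ‖ ^ 2 = ‖u‖ ^ 2 - s ^ 2 := by
    rw [norm_sub_sq_real]
    rw [real_inner_smul_right, norm_smul, hζ, ← hs, mul_one, Real.norm_eq_abs, sq_abs]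
    ring
  have hnθ : ‖θ - t • ζ‖ ^ 2 = 1 - t ^ 2 := by
    rw [norm_sub_sq_real]
    rw [real_inner_smul_right, norm_smul, hζ, hθ, ← real_inner_comm θ ζ, ← htt,
      mul_one, Real.norm_eq_abs, sq_abs]
    ring
  have hθ1 : ‖θ - t • ζ‖ ≤ 1 := by
    nlinarith [norm_nonneg (θ - t • ζ), sq_nonneg t]
  have hCS : ⟪u - s • ζ, θ - t • ζ⟫ ≤ ‖u - s • ζ‖ * ‖θ - t • ζ‖ :=
    real_inner_le_norm _ _
  have hst : s * t ≤ 0 := mul_nonpos_of_nonneg_of_nonpos hs0 ht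
  have hA : α * ‖u‖ < ‖u - s • ζ‖ := by
    have h3 : ‖u - s • ζ‖ * ‖θ - t • ζ‖ ≤ ‖u - s • ζ‖ :=
      mul_le_of_le_one_right (norm_nonneg _) hθ1
    calc α * ‖u‖ < ⟪u, θ⟫ := h2
      _ = s * t + ⟪u - s • ζ, θ - t • ζ⟫ := hkey
      _ ≤ ⟪u - s • ζ, θ - t • ζ⟫ := by linarith
      _ ≤ ‖u - s • ζ‖ * ‖θ - t • ζ‖ := hCS
      _ ≤ ‖u - s • ζ‖ := h3
  have hAn : 0 ≤ α * ‖u‖ := by positivity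
  have h4 : (α * ‖u‖) ^ 2 < ‖u‖ ^ 2 - s ^ 2 := by
    nlinarith [hA, hnu]
  have h5 : (1 - α ^ 2) * ‖u‖ ^ 2 < s ^ 2 := by
    nlinarith [h1, mul_nonneg hsqrt0 (norm_nonneg u)]
  nlinarith [h4, h5]

theorem stmt11 (n : ℕ) (x θ ζ : EuclideanSpace ℝ (Fin n)) (r α : ℝ)
    (hθ : ‖θ‖ = 1) (hζ : ‖ζ‖ = 1) (hr : 0 < r) (hα0 : 0 < α) (hα1 : α ≤ 1) :
    (closedBall x r ∩ oneSidedCone x ζ α) ∩ almostHalfSpace x θ α = ∅ ∨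
    (closedBall x r ∩ oneSidedCone x (-ζ) α) ∩ almostHalfSpace x θ α = ∅ := by
  rcases le_or_gt ⟪ζ, θ⟫ 0 with ht | ht
  · left
    have h := cone_half_empty x θ ζ α hθ hζ hα0 hα1 ht
    rw [inter_assoc]
    rw [eq_empty_iff_forall_notMem] at h ⊢
    intro y hy
    exact h y ⟨hy.2.1, hy.2.2⟩
  · right
    have ht' : ⟪-ζ, θ⟫ ≤ 0 := by
      rw [inner_neg_left]; linarith
    have h := cone_half_empty x θ (-ζ) α hθ (by rw [norm_neg]; exact hζ) hα0 hα1 ht'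
    rw [inter_assoc]
    rw [eq_empty_iff_forall_notMem] at h ⊢
    intro y hy
    exact h y ⟨hy.2.1, hy.2.2⟩
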